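/- Define R¹(z,w) = (2/√π) e^{(z−w)²} ∫_{−c̃}^{c̃} e^{−t²} cos(2t(z−w)) dt for fixed c̃ > 0. Then ∂R¹/∂z (z,w) = (4/√π) e^{(z−w)²−c̃²} sin(2c̃(z−w)) for all complex z, w. -/

import Mathlib

open Real MeasureTheory

/-- `R¹(z,w) = (2/√π) e^{(z−w)²} ∫_{−c̃}^{c̃} e^{−t²} cos(2t(z−w)) dt`. -/
noncomputable def RoneAH (ct : ℝ) (z w : ℂ) : ℂ :=
  (2 / (Real.sqrt Real.pi : ℂ)) * Complex.exp ((z - w) ^ 2) *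
    ∫ t in (-ct)..ct, (Real.exp (-t ^ 2) : ℂ) * Complex.cos (2 * t * (z - w))

noncomputable def Haux (c : ℝ) (u : ℂ) : ℂ :=
  ∫ t in (-c)..c, Complex.exp ((u + (t : ℂ) * Complex.I) ^ 2)

-- derivative in t of exp((u+tI)^2)
lemma inner_hasDerivAt (u : ℂ) (t : ℝ) :
    HasDerivAt (fun s : ℝ => Complex.exp ((u + (s : ℂ) * Complex.I) ^ 2))
      (2 * (u + (t : ℂ) * Complex.I) * Complex.I *
        Complex.exp ((u + (t : ℂ) * Complex.I) ^ 2)) t := by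
  have h0 : HasDerivAt (fun s : ℝ => ((s : ℝ) : ℂ)) 1 t := by
    simpa using (hasDerivAt_id t).ofReal_comp
  have h1 : HasDerivAt (fun s : ℝ => u + (s : ℂ) * Complex.I) Complex.I t := by
    simpa using (h0.mul_const Complex.I).const_add u
  have h2 : HasDerivAt (fun s : ℝ => (u + (s : ℂ) * Complex.I) ^ 2)
      (2 * (u + (t : ℂ) * Complex.I) * Complex.I) t := by
    have h : HasDerivAt (fun s : ℝ => (u + (s:ℂ)*Complex.I) * (u + (s:ℂ)*Complex.I)) _ t :=
      h1.mul h1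
    have : (fun s : ℝ => (u + (s:ℂ)*Complex.I) * (u + (s:ℂ)*Complex.I))
        = fun s : ℝ => (u + (s:ℂ)*Complex.I) ^ 2 := by
      funext s; ring
    rw [this] at h
    convert h using 1
    ring
  have := h2.cexp
  convert this using 1
  ring

lemma param_hasDerivAt (t : ℝ) (x : ℂ) :
    HasDerivAt (fun x : ℂ => Complex.exp ((x + (t : ℂ) * Complex.I) ^ 2))
      (2 * (x + (t : ℂ) * Complex.I) * Complex.exp ((x + (t : ℂ) * Complex.I) ^ 2)) x := by
  have h1 : HasDerivAt (fun x : ℂ => (x + (t : ℂ) * Complex.I) ^ 2)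
      (2 * (x + (t : ℂ) * Complex.I)) x := by
    simpa using ((hasDerivAt_id x).add_const ((t : ℂ) * Complex.I)).fun_pow 2
  have := h1.cexp
  refine this.congr_deriv ?_
  ring

lemma norm_exp_sq_le (s : ℂ) : ‖Complex.exp (s ^ 2)‖ ≤ Real.exp (‖s‖ ^ 2) := by
  rw [Complex.norm_exp]
  apply Real.exp_le_exp.2
  calc (s ^ 2).re ≤ ‖s ^ 2‖ := Complex.re_le_norm _
    _ = ‖s‖ ^ 2 := by rw [norm_pow]

lemma cont_param (x : ℂ) :
    Continuous (fun t : ℝ => Complex.exp ((x + (t : ℂ) * Complex.I) ^ 2)) := by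
  fun_prop

lemma cont_param' (x : ℂ) :
    Continuous (fun t : ℝ =>
      2 * (x + (t : ℂ) * Complex.I) * Complex.exp ((x + (t : ℂ) * Complex.I) ^ 2)) := by
  fun_prop

lemma haux_hasDerivAt0 (c : ℝ) (u : ℂ) :
    HasDerivAt (Haux c)
      (∫ t in (-c)..c,
        2 * (u + (t : ℂ) * Complex.I) * Complex.exp ((u + (t : ℂ) * Complex.I) ^ 2)) u := by
  set M : ℝ := ‖u‖ + 1 + |c| with hM
  have hMnn : 0 ≤ M := by positivity
  refine (intervalIntegral.hasDerivAt_integral_of_dominated_loc_of_deriv_le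
    (F := fun x t => Complex.exp ((x + (t : ℂ) * Complex.I) ^ 2))
    (F' := fun x t => 2 * (x + (t : ℂ) * Complex.I) *
      Complex.exp ((x + (t : ℂ) * Complex.I) ^ 2))
    (bound := fun _ => 2 * M * Real.exp (M ^ 2)) (s := Metric.ball u 1) (Metric.ball_mem_nhds u one_pos)
    ?_ ?_ ?_ ?_ ?_ ?_).2
  · filter_upwards with x
    exact (cont_param x).aestronglyMeasurable
  · exact (cont_param u).intervalIntegrable _ _
  · exact ((cont_param' u).aestronglyMeasurable)
  · filter_upwards with t
    intro ht x hx
    have htc : |t| ≤ |c| := by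
      rw [Set.mem_uIoc] at ht
      rw [abs_le]
      rcases ht with ⟨h1, h2⟩ | ⟨h1, h2⟩ <;> constructor <;>
        nlinarith [le_abs_self c, neg_abs_le c]
    have hxu : ‖x‖ ≤ ‖u‖ + 1 := by
      have := mem_ball_iff_norm.1 hx
      calc ‖x‖ = ‖u + (x - u)‖ := by ring_nf
        _ ≤ ‖u‖ + ‖x - u‖ := norm_add_le _ _
        _ ≤ ‖u‖ + 1 := by linarith
    have hs : ‖x + (t : ℂ) * Complex.I‖ ≤ M := by
      calc ‖x + (t : ℂ) * Complex.I‖ ≤ ‖x‖ + ‖(t : ℂ) * Complex.I‖ := norm_add_le _ _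
        _ = ‖x‖ + |t| := by simp
        _ ≤ M := by rw [hM]; linarith
    calc ‖2 * (x + (t : ℂ) * Complex.I) * Complex.exp ((x + (t : ℂ) * Complex.I) ^ 2)‖
        = 2 * ‖x + (t : ℂ) * Complex.I‖ * ‖Complex.exp ((x + (t : ℂ) * Complex.I) ^ 2)‖ := by
          simp [norm_mul]
      _ ≤ 2 * M * Real.exp (M ^ 2) := by
          apply mul_le_mul
          · linarith
          · refine (norm_exp_sq_le _).trans (Real.exp_le_exp.2 ?_)
            have := norm_nonneg (x + (t : ℂ) * Complex.I)
            nlinarith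
          · exact norm_nonneg _
          · positivity
  · exact intervalIntegrable_const
  · filter_upwards with t
    intro ht x hx
    exact param_hasDerivAt t x

lemma ftc_step (c : ℝ) (u : ℂ) :
    (∫ t in (-c)..c,
      2 * (u + (t : ℂ) * Complex.I) * Complex.exp ((u + (t : ℂ) * Complex.I) ^ 2))
      = 2 * Complex.exp (u ^ 2 - (c : ℂ) ^ 2) * Complex.sin (2 * c * u) := by
  have hderiv : ∀ t ∈ Set.uIcc (-c) c,
      HasDerivAt (fun s : ℝ => -Complex.I * Complex.exp ((u + (s : ℂ) * Complex.I) ^ 2))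
        (2 * (u + (t : ℂ) * Complex.I) * Complex.exp ((u + (t : ℂ) * Complex.I) ^ 2)) t := by
    intro t _
    have := (inner_hasDerivAt u t).const_mul (-Complex.I)
    refine this.congr_deriv (Eq.symm ?_)
    linear_combination (2 * (u + (t:ℂ) * Complex.I) *
      Complex.exp ((u + (t : ℂ) * Complex.I) ^ 2)) * Complex.I_sq
  rw [intervalIntegral.integral_eq_sub_of_hasDerivAt hderiv
    ((cont_param' u).intervalIntegrable _ _)]
  have e1 : (u + (c : ℂ) * Complex.I) ^ 2 = (u ^ 2 - (c : ℂ) ^ 2) + (2 * c * u) * Complex.I := by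
    linear_combination ((c : ℂ) ^ 2) * Complex.I_sq
  have e2 : (u + ((-c : ℝ) : ℂ) * Complex.I) ^ 2
      = (u ^ 2 - (c : ℂ) ^ 2) + -(2 * (c : ℂ) * u) * Complex.I := by
    push_cast
    linear_combination ((c : ℂ) ^ 2) * Complex.I_sq
  rw [e1, e2, Complex.exp_add, Complex.exp_add, Complex.sin]
  ring

lemma haux_eq (c : ℝ) (u : ℂ) :
    Complex.exp (u ^ 2) *
      (∫ t in (-c)..c, (Real.exp (-t ^ 2) : ℂ) * Complex.cos (2 * t * u)) = Haux c u := by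
  have key : ∀ t : ℝ, Complex.exp (u ^ 2) * ((Real.exp (-t ^ 2) : ℂ) * Complex.cos (2 * t * u))
      = (Complex.exp ((u + (t : ℂ) * Complex.I) ^ 2)
          + Complex.exp ((u + ((-t : ℝ) : ℂ) * Complex.I) ^ 2)) / 2 := by
    intro t
    have e1 : (u + (t : ℂ) * Complex.I) ^ 2
        = u ^ 2 + -(t : ℂ) ^ 2 + (2 * t * u) * Complex.I := by
      linear_combination ((t : ℂ) ^ 2) * Complex.I_sq
    have e2 : (u + ((-t : ℝ) : ℂ) * Complex.I) ^ 2
        = u ^ 2 + -(t : ℂ) ^ 2 + -(2 * (t : ℂ) * u) * Complex.I := by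
      push_cast
      linear_combination ((t : ℂ) ^ 2) * Complex.I_sq
    rw [e1, e2, Complex.exp_add, Complex.exp_add, Complex.exp_add, Complex.exp_add, Complex.cos]
    push_cast
    ring
  rw [← intervalIntegral.integral_const_mul]
  simp_rw [key]
  rw [intervalIntegral.integral_div, intervalIntegral.integral_add
    ((cont_param u).intervalIntegrable _ _)
    ((show Continuous (fun t : ℝ => Complex.exp ((u + ((-t : ℝ) : ℂ) * Complex.I) ^ 2)) by
      fun_prop).intervalIntegrable _ _)]
  have h2 : (∫ t in (-c)..c, Complex.exp ((u + ((-t : ℝ) : ℂ) * Complex.I) ^ 2))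
      = ∫ t in (-c)..c, Complex.exp ((u + (t : ℂ) * Complex.I) ^ 2) := by
    have := intervalIntegral.integral_comp_neg
      (fun t : ℝ => Complex.exp ((u + (t : ℂ) * Complex.I) ^ 2)) (a := -c) (b := c)
    simpa using this
  rw [h2, Haux]
  ring


/-- `∂R¹/∂z (z,w) = (4/√π) e^{(z−w)²−c̃²} sin(2c̃(z−w))`. -/
theorem stmt_14 (ct : ℝ) (hct : 0 < ct) (z w : ℂ) :
    deriv (fun z' : ℂ => RoneAH ct z' w) z
      = (4 / (Real.sqrt Real.pi : ℂ)) * Complex.exp ((z - w) ^ 2 - (ct : ℂ) ^ 2) *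
        Complex.sin (2 * ct * (z - w)) := by
  have hH : ∀ u : ℂ, HasDerivAt (Haux ct)
      (2 * Complex.exp (u ^ 2 - (ct : ℂ) ^ 2) * Complex.sin (2 * ct * u)) u := by
    intro u
    have := haux_hasDerivAt0 ct u
    rwa [ftc_step] at this
  have hfun : (fun z' : ℂ => RoneAH ct z' w)
      = fun z' : ℂ => (2 / (Real.sqrt Real.pi : ℂ)) * Haux ct (z' - w) := by
    funext z'
    rw [RoneAH, mul_assoc, haux_eq]
  rw [hfun]
  have hcomp : HasDerivAt (fun z' : ℂ => Haux ct (z' - w))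
      (2 * Complex.exp ((z - w) ^ 2 - (ct : ℂ) ^ 2) * Complex.sin (2 * ct * (z - w))) z := by
    have := (hH (z - w)).comp z ((hasDerivAt_id z).sub_const w)
    rw [mul_one] at this
    exact this
  rw [(hcomp.const_mul ((2 : ℂ) / (Real.sqrt Real.pi : ℂ))).deriv]
  ring
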